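/- arXiv:1008.2018 — 5 statements merged into one kernel-verified Lean document; each statement's English description precedes it below -/
import Mathlib

section
/- Let F_1, F_2, F_3, h_1, h_2, h_3 be polynomials in ℂ[x,y,z] satisfying h_1^2·F_1 + h_2^3·F_2 + h_3^6·F_3 = 0. Then the polynomials h̄_1 := F_1^2·F_2·h_1, h̄_2 := F_1·F_2·h_2, h̄_3 := h_3 satisfy h̄_1^2 + h̄_2^3 + h̄_3^6·(F_1^3·F_2^2·F_3) = 0. Consequently every quasi-toric relation of type (2,3,6) is equivalent to one of the form h̄_1^2 + h̄_2^3 + h̄_3^6·G = 0 with G := F_1^3·F_2^2·F_3. -/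
open MvPolynomial

/-- If `h₁²·F₁ + h₂³·F₂ + h₃⁶·F₃ = 0` in `ℂ[x,y,z]`, then with
`h̄₁ := F₁²·F₂·h₁`, `h̄₂ := F₁·F₂·h₂`, `h̄₃ := h₃` and `G := F₁³·F₂²·F₃` one has
`h̄₁² + h̄₂³ + h̄₃⁶·G = 0`; moreover `λ := F₁³·F₂²` realizes the equivalence of
the two quasi-toric relations of type `(2,3,6)`:
`h̄ᵢ^{eᵢ}·F̄ᵢ = λ·hᵢ^{eᵢ}·Fᵢ` (with `F̄₁ = F̄₂ = 1`, `F̄₃ = G`) and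
`h̄₁·h̄₂·h̄₃ = λ·h₁·h₂·h₃`. -/
theorem stmt_3 (F₁ F₂ F₃ h₁ h₂ h₃ : MvPolynomial (Fin 3) ℂ)
    (hrel : h₁ ^ 2 * F₁ + h₂ ^ 3 * F₂ + h₃ ^ 6 * F₃ = 0) :
    (F₁ ^ 2 * F₂ * h₁) ^ 2 + (F₁ * F₂ * h₂) ^ 3 +
        h₃ ^ 6 * (F₁ ^ 3 * F₂ ^ 2 * F₃) = 0 ∧
      (F₁ ^ 2 * F₂ * h₁) ^ 2 * 1 = F₁ ^ 3 * F₂ ^ 2 * (h₁ ^ 2 * F₁) ∧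
      (F₁ * F₂ * h₂) ^ 3 * 1 = F₁ ^ 3 * F₂ ^ 2 * (h₂ ^ 3 * F₂) ∧
      h₃ ^ 6 * (F₁ ^ 3 * F₂ ^ 2 * F₃) = F₁ ^ 3 * F₂ ^ 2 * (h₃ ^ 6 * F₃) ∧
      (F₁ ^ 2 * F₂ * h₁) * (F₁ * F₂ * h₂) * h₃ = F₁ ^ 3 * F₂ ^ 2 * (h₁ * h₂ * h₃) := by
  refine ⟨?_, by ring, by ring, by ring, by ring⟩
  have : F₁ ^ 3 * F₂ ^ 2 * (h₁ ^ 2 * F₁ + h₂ ^ 3 * F₂ + h₃ ^ 6 * F₃) = 0 := by rw [hrel]; ring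
  linear_combination this
end

section
/- Let K be the field ℂ(x,y) (the fraction field of the polynomial ring over ℂ in two variables) and let F ∈ K. Suppose f_2, f_3, g_2, g_3 ∈ K satisfy f_2^3 + f_3^2 = F, g_2^3 + g_3^2 = F, and f_2 ≠ g_2. Then u := (g_2·f_2^2 + g_2^2·f_2 + 2·g_3·f_3 − 2F)/(f_2 − g_2)^2 and v := (3·f_2·g_2·(f_3·g_2 − g_3·f_2) + (f_3 − g_3)·(g_3·f_3 − 3F))/(f_2 − g_2)^3 satisfy u^3 + v^2 = F. -/
set_option maxHeartbeats 2000000 in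
/-- Addition law on sections of the elliptic threefold `u² + v³ = F` over
`K = ℂ(x,y)`: if `f₂³ + f₃² = F`, `g₂³ + g₃² = F` and `f₂ ≠ g₂`, then the pair
`(u, v)` given by the displayed formulas again satisfies `u³ + v² = F`. -/
theorem stmt_5 (F f₂ f₃ g₂ g₃ : FractionRing (MvPolynomial (Fin 2) ℂ))
    (hf : f₂ ^ 3 + f₃ ^ 2 = F) (hg : g₂ ^ 3 + g₃ ^ 2 = F) (hne : f₂ ≠ g₂) :
    ((g₂ * f₂ ^ 2 + g₂ ^ 2 * f₂ + 2 * g₃ * f₃ - 2 * F) / (f₂ - g₂) ^ 2) ^ 3 +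
      ((3 * f₂ * g₂ * (f₃ * g₂ - g₃ * f₂) + (f₃ - g₃) * (g₃ * f₃ - 3 * F)) /
          (f₂ - g₂) ^ 3) ^ 2 = F := by
  have hd : f₂ - g₂ ≠ 0 := sub_ne_zero.mpr hne
  have hd6 : (f₂ - g₂) ^ 6 ≠ 0 := pow_ne_zero _ hd
  subst hf
  rw [div_pow, div_pow, ← pow_mul, ← pow_mul]
  norm_num
  rw [← add_div, div_eq_iff hd6]
  linear_combination (f₃^2*g₃^2 - f₃^2*g₂^3 - f₃^4 + 6*f₂*f₃^2*g₂^2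
    + 6*f₂^2*f₃*g₂*g₃ - 12*f₂^2*f₃^2*g₂ - 6*f₂^3*f₃*g₃ + 7*f₂^3*f₃^2
    + 9*f₂^4*g₂^2 - 18*f₂^5*g₂ + 9*f₂^6) * hg
end

section
/- Let ω ∈ ℂ satisfy ω^2 + ω + 1 = 0 (a primitive cube root of unity). Define in ℂ[x,y,z]: L_0 := x + y + z, C_{4,3} := x²y² + y²z² + z²x² − 2xyz(x+y+z), C_2 := zx + ω·yz − (1+ω)·xy, and C_3 := x²y − x²z − y²x − 3(1+2ω)·xyz + y²z + z²x − yz². Then 4·C_2^3 + C_3^2 = C_{4,3}·L_0^2. In particular the non-reduced sextic C_{4,3}·L_0^2 supports a quasi-toric relation of elliptic type (2,3,6). -/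
open MvPolynomial

/-- The quasi-toric relation of elliptic type `(2,3,6)` supported by the
non-reduced sextic `C₄,₃ · L₀²` (tricuspidal quartic together with its
bitangent): with `ω` a primitive cube root of unity, `x = X 0`, `y = X 1`,
`z = X 2`, one has `4·C₂³ + C₃² = C₄,₃ · L₀²`. -/
theorem stmt_9 (ω : ℂ) (hω : ω ^ 2 + ω + 1 = 0) :
    4 * (X 2 * X 0 + C ω * (X 1 * X 2) - C (1 + ω) * (X 0 * X 1)) ^ 3 +
      ((X 0) ^ 2 * X 1 - (X 0) ^ 2 * X 2 - (X 1) ^ 2 * X 0 -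
        C (3 * (1 + 2 * ω)) * (X 0 * X 1 * X 2) +
        (X 1) ^ 2 * X 2 + (X 2) ^ 2 * X 0 - X 1 * (X 2) ^ 2) ^ 2 =
    ((X 0) ^ 2 * (X 1) ^ 2 + (X 1) ^ 2 * (X 2) ^ 2 + (X 2) ^ 2 * (X 0) ^ 2 -
        2 * (X 0 * X 1 * X 2) * (X 0 + X 1 + X 2)) *
      ((X 0 + X 1 + X 2 : MvPolynomial (Fin 3) ℂ)) ^ 2 := by
  have hC : (C ω : MvPolynomial (Fin 3) ℂ) ^ 2 + C ω + 1 = 0 := by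
    rw [← C_1, ← C_pow, ← C_add, ← C_add, hω, C_0]
  set x : MvPolynomial (Fin 3) ℂ := X 0
  set y : MvPolynomial (Fin 3) ℂ := X 1
  set z : MvPolynomial (Fin 3) ℂ := X 2
  have hsum : C (1 + ω) = (1 : MvPolynomial (Fin 3) ℂ) + C ω := by
    rw [C_add, C_1]
  have h3 : C (3 * (1 + 2 * ω)) = (3 : MvPolynomial (Fin 3) ℂ) + 6 * C ω := by
    rw [show (3 : ℂ) * (1 + 2 * ω) = 3 + 6 * ω by ring, C_add, C_mul]
    simp only [map_ofNat]
  rw [hsum, h3]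
  linear_combination
    ((-4) * y ^ 3 * z ^ 3 + 12 * x * y ^ 2 * z ^ 3 + 12 * x ^ 2 * y ^ 2 * z ^ 2 +
        12 * x ^ 2 * y ^ 3 * z + 12 * x ^ 3 * y ^ 2 * z + (-8) * x ^ 3 * y ^ 3 +
      (4 * y ^ 3 * z ^ 3 + (-12) * x * y ^ 3 * z ^ 2 + 12 * x ^ 2 * y ^ 3 * z +
        (-4) * x ^ 3 * y ^ 3) * C ω) * hC
end

section
/- Define in ℂ[x,y,z] the two cuspidal cubics F_1 := y³ − z³ + 3x²z + 2x³ and F_2 := y³ − z³ + 3x²z − 2x³, and set f_2 := yz + y² + z² − x² and f_3 := z³ − x²z − 2yx² + 2yz² + 2y²z + y³. Then the two polynomial identities hold: 3·f_3² − 4·f_2³ + F_1·F_2 = 0 and 4·x³ − F_1 + F_2 = 0. In particular the sextic F_1·F_2 supports a quasi-toric relation of elliptic type (2,3,6) and a quasi-toric relation of elliptic type (3,3,3). -/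
open MvPolynomial

/-- The sextic `F₁·F₂`, union of the two cuspidal cubics
`F₁ = y³ − z³ + 3x²z + 2x³` and `F₂ = y³ − z³ + 3x²z − 2x³`, supports both a
quasi-toric relation of elliptic type `(2,3,6)`, namely
`3·f₃² − 4·f₂³ + F₁·F₂ = 0`, and one of elliptic type `(3,3,3)`, namely
`4·x³ − F₁ + F₂ = 0` (here `x = X 0`, `y = X 1`, `z = X 2`). -/
theorem stmt_10 :
    (3 * ((X 2) ^ 3 - (X 0) ^ 2 * X 2 - 2 * X 1 * (X 0) ^ 2 + 2 * X 1 * (X 2) ^ 2 +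
          2 * (X 1) ^ 2 * X 2 + (X 1) ^ 3) ^ 2 -
        4 * (X 1 * X 2 + (X 1) ^ 2 + (X 2) ^ 2 - (X 0) ^ 2) ^ 3 +
        ((X 1) ^ 3 - (X 2) ^ 3 + 3 * (X 0) ^ 2 * X 2 + 2 * (X 0) ^ 3) *
          ((X 1) ^ 3 - (X 2) ^ 3 + 3 * (X 0) ^ 2 * X 2 - 2 * (X 0) ^ 3) =
      (0 : MvPolynomial (Fin 3) ℂ)) ∧
    (4 * (X 0) ^ 3 -
        ((X 1) ^ 3 - (X 2) ^ 3 + 3 * (X 0) ^ 2 * X 2 + 2 * (X 0) ^ 3) +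
        ((X 1) ^ 3 - (X 2) ^ 3 + 3 * (X 0) ^ 2 * X 2 - 2 * (X 0) ^ 3) =
      (0 : MvPolynomial (Fin 3) ℂ)) := by
  constructor <;> ring
end

section
/- Let ω ∈ ℂ satisfy ω^2 + ω + 1 = 0 (a primitive cube root of unity). For i = 1, 2, 3 define in ℂ[x,y,z]: F_i := (y − ω^i·z)(z − ω^{i+1}·x)(x − ω^{i+2}·y), and define the linear forms ℓ_1 := (ω−ω²)x + (ω−ω²)y + (ω²−1)z, ℓ_2 := (ω−ω²)z + (ω−ω²)x + (ω²−1)y, ℓ_3 := (ω−ω²)y + (ω−ω²)z + (ω²−1)x. Then ℓ_1³·F_1 + ℓ_2³·F_2 + ℓ_3³·F_3 = 0, and moreover F_1·F_2·F_3 = (y³−z³)(z³−x³)(x³−y³). In particular the curve (y³−z³)(z³−x³)(x³−y³) = 0 supports a quasi-toric relation of elliptic type (3,3,3) with nonconstant coefficients ℓ_i. -/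
open MvPolynomial

set_option maxHeartbeats 4000000 in
/-- The quasi-toric relation of elliptic type `(3,3,3)` with nonconstant
coefficients supported by the nine lines `(y³−z³)(z³−x³)(x³−y³) = 0`:
with `ω` a primitive cube root of unity,
`Fᵢ := (y − ωⁱz)(z − ω^{i+1}x)(x − ω^{i+2}y)` and the linear forms `ℓᵢ` as
displayed, one has `ℓ₁³F₁ + ℓ₂³F₂ + ℓ₃³F₃ = 0` and
`F₁F₂F₃ = (y³−z³)(z³−x³)(x³−y³)` (here `x = X 0`, `y = X 1`, `z = X 2`). -/
theorem stmt_11 (ω : ℂ) (hω : ω ^ 2 + ω + 1 = 0) :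
    ((C (ω - ω ^ 2) * X 0 + C (ω - ω ^ 2) * X 1 + C (ω ^ 2 - 1) * X 2) ^ 3 *
          ((X 1 - C (ω ^ 1) * X 2) * (X 2 - C (ω ^ 2) * X 0) * (X 0 - C (ω ^ 3) * X 1)) +
        (C (ω - ω ^ 2) * X 2 + C (ω - ω ^ 2) * X 0 + C (ω ^ 2 - 1) * X 1) ^ 3 *
          ((X 1 - C (ω ^ 2) * X 2) * (X 2 - C (ω ^ 3) * X 0) * (X 0 - C (ω ^ 4) * X 1)) +
        (C (ω - ω ^ 2) * X 1 + C (ω - ω ^ 2) * X 2 + C (ω ^ 2 - 1) * X 0) ^ 3 *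
          ((X 1 - C (ω ^ 3) * X 2) * (X 2 - C (ω ^ 4) * X 0) * (X 0 - C (ω ^ 5) * X 1)) =
      (0 : MvPolynomial (Fin 3) ℂ)) ∧
    (((X 1 - C (ω ^ 1) * X 2) * (X 2 - C (ω ^ 2) * X 0) * (X 0 - C (ω ^ 3) * X 1)) *
        ((X 1 - C (ω ^ 2) * X 2) * (X 2 - C (ω ^ 3) * X 0) * (X 0 - C (ω ^ 4) * X 1)) *
        ((X 1 - C (ω ^ 3) * X 2) * (X 2 - C (ω ^ 4) * X 0) * (X 0 - C (ω ^ 5) * X 1)) =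
      ((X 1) ^ 3 - (X 2) ^ 3) * ((X 2) ^ 3 - (X 0) ^ 3) *
        (((X 0) ^ 3 - (X 1) ^ 3 : MvPolynomial (Fin 3) ℂ))) := by
  constructor
  · apply MvPolynomial.funext
    intro v
    simp only [map_add, map_mul, map_sub, map_pow, eval_C, eval_X, map_zero]
    set a := v 0; set b := v 1; set c := v 2
    linear_combination ((-1) * a^1 * b^1 * c^4 + (-1) * a^1 * b^4 * c^1 + (-1) * a^4 * b^1 * c^1 + (1) * ω^1 * a^1 * c^5 + (1) * ω^1 * a^1 * b^1 * c^4 + (3) * ω^1 * a^1 * b^2 * c^3 + (3) * ω^1 * a^1 * b^3 * c^2 + (1) * ω^1 * a^1 * b^4 * c^1 + (3) * ω^1 * a^2 * b^1 * c^3 + (3) * ω^1 * a^2 * b^3 * c^1 + (3) * ω^1 * a^3 * b^1 * c^2 + (3) * ω^1 * a^3 * b^2 * c^1 + (1) * ω^1 * a^4 * b^1 * c^1 + (-1) * ω^2 * a^1 * c^5 + (-9) * ω^2 * a^1 * b^2 * c^3 + (-8) * ω^2 * a^1 * b^3 * c^2 + (3) * ω^2 * a^1 * b^4 * c^1 + (-3)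 * ω^2 * a^2 * c^4 + (-8) * ω^2 * a^2 * b^1 * c^3 + (-18) * ω^2 * a^2 * b^2 * c^2 + (-9) * ω^2 * a^2 * b^3 * c^1 + (-9) * ω^2 * a^3 * b^1 * c^2 + (-9) * ω^2 * a^3 * b^2 * c^1 + (3) * ω^2 * a^4 * b^1 * c^1 + (1) * ω^3 * b^2 * c^4 + (-3) * ω^3 * a^1 * c^5 + (4) * ω^3 * a^1 * b^1 * c^4 + (9) * ω^3 * a^1 * b^2 * c^3 + (8) * ω^3 * a^1 * b^3 * c^2 + (-2) * ω^3 * a^1 * b^4 * c^1 + (5) * ω^3 * a^2 * c^4 + (14) * ω^3 * a^2 * b^1 * c^3 + (48) * ω^3 * a^2 * b^2 * c^2 + (9) * ω^3 * a^2 * b^3 * c^1 + (1) * ω^3 * a^2 * b^4 + (3) * ω^3 * a^3 * c^3 + (6) * ω^3 * a^3 * b^1 * c^2 + (9) * ω^3 * a^3 * b^2 * c^1 + (1) * ω^3 * a^4 * c^2 + (-2) * ω^3 * a^4 * b^1 * c^1 + (-1) * ω^4 * b^1 * c^5 + (-1) * ω^4 * b^2 * c^4 + (-3) * ω^4 * b^3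 * c^3 + (1) * ω^4 * b^5 * c^1 + (4) * ω^4 * a^1 * c^5 + (-4) * ω^4 * a^1 * b^1 * c^4 + (-9) * ω^4 * a^1 * b^2 * c^3 + (-7) * ω^4 * a^1 * b^3 * c^2 + (-10) * ω^4 * a^1 * b^4 * c^1 + (4) * ω^4 * a^2 * c^4 + (-15) * ω^4 * a^2 * b^1 * c^3 + (-27) * ω^4 * a^2 * b^2 * c^2 + (-3) * ω^4 * a^2 * b^3 * c^1 + (-1) * ω^4 * a^2 * b^4 + (-9) * ω^4 * a^3 * c^3 + (3) * ω^4 * a^3 * b^2 * c^1 + (-3) * ω^4 * a^3 * b^3 + (-2) * ω^4 * a^4 * c^2 + (-7) * ω^4 * a^4 * b^1 * c^1 + (1) * ω^4 * a^5 * b^1 + (1) * ω^5 * b^1 * c^5 + (6) * ω^5 * b^3 * c^3 + (-1) * ω^5 * b^5 * c^1 + (1) * ω^5 * a^1 * c^5 + (-3) * ω^5 * a^1 * b^1 * c^4 + (14) * ω^5 * a^1 * b^2 * c^3 + (14) * ω^5 * a^1 * b^3 * c^2 + (15) * ω^5 * a^1 * b^4 * c^1 + (-12) * ω^5 * a^2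 * c^4 + (-2) * ω^5 * a^2 * b^1 * c^3 + (-30) * ω^5 * a^2 * b^2 * c^2 + (-4) * ω^5 * a^2 * b^3 * c^1 + (-4) * ω^5 * a^2 * b^4 + (3) * ω^5 * a^3 * c^3 + (6) * ω^5 * a^3 * b^1 * c^2 + (-11) * ω^5 * a^3 * b^2 * c^1 + (3) * ω^5 * a^3 * b^3 + (-3) * ω^5 * a^4 * c^2 + (6) * ω^5 * a^4 * b^1 * c^1 + (-3) * ω^5 * a^4 * b^2 + (-2) * ω^5 * a^5 * b^1 + (3) * ω^6 * b^1 * c^5 + (-2) * ω^6 * b^2 * c^4 + (3) * ω^6 * b^3 * c^3 + (-4) * ω^6 * b^4 * c^2 + (-4) * ω^6 * b^5 * c^1 + (-3) * ω^6 * a^1 * c^5 + (-2) * ω^6 * a^1 * b^1 * c^4 + (-11) * ω^6 * a^1 * b^2 * c^3 + (-14) * ω^6 * a^1 * b^3 * c^2 + (-6) * ω^6 * a^1 * b^4 * c^1 + (8) * ω^6 * a^2 * c^4 + (7) * ω^6 * a^2 * b^1 * c^3 + (45) * ω^6 * a^2 * b^2 * c^2 + (8) * ω^6 * a^2 * b^3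 * c^1 + (8) * ω^6 * a^2 * b^4 + (21) * ω^6 * a^3 * c^3 + (-6) * ω^6 * a^3 * b^1 * c^2 + (4) * ω^6 * a^3 * b^2 * c^1 + (18) * ω^6 * a^3 * b^3 + (11) * ω^6 * a^4 * c^2 + (3) * ω^6 * a^4 * b^1 * c^1 + (9) * ω^6 * a^4 * b^2 + (1) * ω^6 * a^5 * c^1 + (-4) * ω^7 * b^1 * c^5 + (-2) * ω^7 * b^2 * c^4 + (-12) * ω^7 * b^3 * c^3 + (11) * ω^7 * b^4 * c^2 + (8) * ω^7 * b^5 * c^1 + (1) * ω^7 * a^1 * c^5 + (17) * ω^7 * a^1 * b^1 * c^4 + (6) * ω^7 * a^1 * b^2 * c^3 + (1) * ω^7 * a^1 * b^3 * c^2 + (6) * ω^7 * a^1 * b^4 * c^1 + (-1) * ω^7 * a^1 * b^5 + (-5) * ω^7 * a^2 * c^4 + (9) * ω^7 * a^2 * b^1 * c^3 + (-24) * ω^7 * a^2 * b^2 * c^2 + (-7) * ω^7 * a^2 * b^3 * c^1 + (-5) * ω^7 * a^2 * b^4 + (-36) * ω^7 * a^3 * c^3 + (-2) * ω^7 * a^3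 * b^1 * c^2 + (-9) * ω^7 * a^3 * b^2 * c^1 + (-42) * ω^7 * a^3 * b^3 + (-7) * ω^7 * a^4 * c^2 + (-9) * ω^7 * a^4 * b^2 + (-5) * ω^7 * a^5 * c^1 + (2) * ω^7 * a^5 * b^1 + (-2) * ω^8 * b^1 * c^5 + (9) * ω^8 * b^2 * c^4 + (-10) * ω^8 * b^4 * c^2 + (-5) * ω^8 * b^5 * c^1 + (-24) * ω^8 * a^1 * b^1 * c^4 + (-4) * ω^8 * a^1 * b^2 * c^3 + (-6) * ω^8 * a^1 * b^3 * c^2 + (-12) * ω^8 * a^1 * b^4 * c^1 + (2) * ω^8 * a^1 * b^5 + (7) * ω^8 * a^2 * c^4 + (1) * ω^8 * a^2 * b^1 * c^3 + (3) * ω^8 * a^2 * b^2 * c^2 + (14) * ω^8 * a^2 * b^3 * c^1 + (7) * ω^8 * a^2 * b^4 + (21) * ω^8 * a^3 * c^3 + (-5) * ω^8 * a^3 * b^1 * c^2 + (20) * ω^8 * a^3 * b^2 * c^1 + (27) * ω^8 * a^3 * b^3 + (-3) * ω^8 * a^4 * c^2 + (-3) * ω^8 * a^4 * b^1 * c^1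 + (4) * ω^8 * a^4 * b^2 + (8) * ω^8 * a^5 * c^1 + (-1) * ω^8 * a^5 * b^1 + (7) * ω^9 * b^1 * c^5 + (1) * ω^9 * b^2 * c^4 + (18) * ω^9 * b^3 * c^3 + (5) * ω^9 * b^4 * c^2 + (1) * ω^9 * b^5 * c^1 + (16) * ω^9 * a^1 * b^1 * c^4 + (-2) * ω^9 * a^1 * b^2 * c^3 + (12) * ω^9 * a^1 * b^3 * c^2 + (3) * ω^9 * a^1 * b^4 * c^1 + (-1) * ω^9 * a^1 * b^5 + (-7) * ω^9 * a^2 * c^4 + (-15) * ω^9 * a^2 * b^1 * c^3 + (9) * ω^9 * a^2 * b^2 * c^2 + (-23) * ω^9 * a^2 * b^3 * c^1 + (-18) * ω^9 * a^2 * b^4 + (3) * ω^9 * a^3 * c^3 + (17) * ω^9 * a^3 * b^1 * c^2 + (-7) * ω^9 * a^3 * b^2 * c^1 + (12) * ω^9 * a^3 * b^3 + (-4) * ω^9 * a^4 * b^1 * c^1 + (-5) * ω^9 * a^4 * b^2 + (-4) * ω^9 * a^5 * c^1 + (-7) * ω^10 * b^1 * c^5 + (-15) * ω^10 * b^2 *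 c^4 + (-21) * ω^10 * b^3 * c^3 + (-5) * ω^10 * b^4 * c^2 + (-4) * ω^10 * a^1 * b^1 * c^4 + (10) * ω^10 * a^1 * b^2 * c^3 + (6) * ω^10 * a^1 * b^3 * c^2 + (9) * ω^10 * a^1 * b^4 * c^1 + (2) * ω^10 * a^1 * b^5 + (4) * ω^10 * a^2 * c^4 + (-3) * ω^10 * a^2 * b^1 * c^3 + (-3) * ω^10 * a^2 * b^2 * c^2 + (13) * ω^10 * a^2 * b^3 * c^1 + (15) * ω^10 * a^2 * b^4 + (-9) * ω^10 * a^3 * c^3 + (-16) * ω^10 * a^3 * b^1 * c^2 + (-24) * ω^10 * a^3 * b^3 + (6) * ω^10 * a^4 * c^2 + (1) * ω^10 * a^4 * b^1 * c^1 + (8) * ω^10 * a^4 * b^2 + (-1) * ω^10 * a^5 * c^1 + (4) * ω^11 * b^1 * c^5 + (12) * ω^11 * b^2 * c^4 + (12) * ω^11 * b^3 * c^3 + (4) * ω^11 * b^4 * c^2 + (3) * ω^11 * a^1 * b^1 * c^4 + (-13) * ω^11 * a^1 * b^2 * c^3 + (-9) * ω^11 * a^1 * b^3 * c^2 + (-12)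 * ω^11 * a^1 * b^4 * c^1 + (-5) * ω^11 * a^1 * b^5 + (-1) * ω^11 * a^2 * c^4 + (12) * ω^11 * a^2 * b^1 * c^3 + (-24) * ω^11 * a^2 * b^2 * c^2 + (5) * ω^11 * a^2 * b^3 * c^1 + (3) * ω^11 * a^2 * b^4 + (3) * ω^11 * a^3 * c^3 + (14) * ω^11 * a^3 * b^1 * c^2 + (-12) * ω^11 * a^3 * b^2 * c^1 + (6) * ω^11 * a^3 * b^3 + (-3) * ω^11 * a^4 * c^2 + (9) * ω^11 * a^4 * b^1 * c^1 + (-4) * ω^11 * a^4 * b^2 + (1) * ω^11 * a^5 * c^1 + (-1) * ω^12 * b^1 * c^5 + (-3) * ω^12 * b^2 * c^4 + (-3) * ω^12 * b^3 * c^3 + (-1) * ω^12 * b^4 * c^2 + (-4) * ω^12 * a^1 * b^1 * c^4 + (10) * ω^12 * a^1 * b^2 * c^3 + (10) * ω^12 * a^1 * b^4 * c^1 + (4) * ω^12 * a^1 * b^5 + (3) * ω^12 * a^2 * b^1 * c^3 + (42) * ω^12 * a^2 * b^2 * c^2 + (-6) * ω^12 * a^2 * b^3 * c^1 + (-9) *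 ω^12 * a^2 * b^4 + (-20) * ω^12 * a^3 * b^1 * c^2 + (6) * ω^12 * a^3 * b^2 * c^1 + (6) * ω^12 * a^3 * b^3 + (-6) * ω^12 * a^4 * b^1 * c^1 + (-1) * ω^12 * a^4 * b^2 + (-2) * ω^13 * a^1 * b^1 * c^4 + (-13) * ω^13 * a^1 * b^2 * c^3 + (-9) * ω^13 * a^1 * b^3 * c^2 + (-7) * ω^13 * a^1 * b^4 * c^1 + (-1) * ω^13 * a^1 * b^5 + (-6) * ω^13 * a^2 * b^1 * c^3 + (-21) * ω^13 * a^2 * b^2 * c^2 + (3) * ω^13 * a^2 * b^4 + (18) * ω^13 * a^3 * b^1 * c^2 + (9) * ω^13 * a^3 * b^2 * c^1 + (-3) * ω^13 * a^3 * b^3 + (-3) * ω^13 * a^4 * b^1 * c^1 + (1) * ω^13 * a^4 * b^2 + (6) * ω^14 * a^1 * b^1 * c^4 + (18) * ω^14 * a^1 * b^2 * c^3 + (18) * ω^14 * a^1 * b^3 * c^2 + (6) * ω^14 * a^1 * b^4 * c^1 + (-6) * ω^14 * a^2 * b^1 * c^3 + (-12) * ω^14 * a^2 * b^2 * c^2 +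 (-6) * ω^14 * a^2 * b^3 * c^1 + (-3) * ω^14 * a^3 * b^1 * c^2 + (-3) * ω^14 * a^3 * b^2 * c^1 + (3) * ω^14 * a^4 * b^1 * c^1 + (-4) * ω^15 * a^1 * b^1 * c^4 + (-12) * ω^15 * a^1 * b^2 * c^3 + (-12) * ω^15 * a^1 * b^3 * c^2 + (-4) * ω^15 * a^1 * b^4 * c^1 + (9) * ω^15 * a^2 * b^1 * c^3 + (18) * ω^15 * a^2 * b^2 * c^2 + (9) * ω^15 * a^2 * b^3 * c^1 + (-6) * ω^15 * a^3 * b^1 * c^2 + (-6) * ω^15 * a^3 * b^2 * c^1 + (1) * ω^15 * a^4 * b^1 * c^1 + (1) * ω^16 * a^1 * b^1 * c^4 + (3) * ω^16 * a^1 * b^2 * c^3 + (3) * ω^16 * a^1 * b^3 * c^2 + (1) * ω^16 * a^1 * b^4 * c^1 + (-3) * ω^16 * a^2 * b^1 * c^3 + (-6) * ω^16 * a^2 * b^2 * c^2 + (-3) * ω^16 * a^2 * b^3 * c^1 + (3) * ω^16 * a^3 * b^1 * c^2 + (3) * ω^16 * a^3 * b^2 * c^1 + (-1) * ω^16 * a^4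 * b^1 * c^1) * hω
  · apply MvPolynomial.funext
    intro v
    simp only [map_add, map_mul, map_sub, map_pow, eval_C, eval_X]
    set a := v 0; set b := v 1; set c := v 2
    linear_combination ((-1) * b^3 * c^6 + (1) * b^6 * c^3 + (1) * a^3 * c^6 + (1) * a^3 * b^3 * c^3 + (-1) * a^3 * b^6 + (-1) * a^6 * c^3 + (1) * a^6 * b^3 + (1) * ω^1 * b^3 * c^6 + (-1) * ω^1 * b^6 * c^3 + (-1) * ω^1 * a^3 * c^6 + (-1) * ω^1 * a^3 * b^2 * c^4 + (-1) * ω^1 * a^3 * b^3 * c^3 + (1) * ω^1 * a^3 * b^6 + (1) * ω^1 * a^6 * c^3 + (-1) * ω^1 * a^6 * b^3 + (-1) * ω^2 * a^4 * b^3 * c^2 + (-1) * ω^3 * b^3 * c^6 + (1) * ω^3 * b^6 * c^3 + (-1) * ω^3 * a^2 * b^4 * c^3 + (1) * ω^3 * a^3 * c^6 + (1) * ω^3 * a^3 * b^1 * c^5 + (1) * ω^3 * a^3 * b^3 * c^3 + (-1) * ω^3 * a^3 * b^6 + (1) * ω^3 * a^4 * b^2 * c^3 + (-1) * ω^3 *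 a^6 * c^3 + (1) * ω^3 * a^6 * b^3 + (1) * ω^4 * b^3 * c^6 + (-1) * ω^4 * b^6 * c^3 + (1) * ω^4 * a^2 * b^3 * c^4 + (-1) * ω^4 * a^3 * c^6 + (-1) * ω^4 * a^3 * b^3 * c^3 + (1) * ω^4 * a^3 * b^6 + (1) * ω^4 * a^4 * b^2 * c^3 + (1) * ω^4 * a^6 * c^3 + (-1) * ω^4 * a^6 * b^3 + (1) * ω^5 * a^2 * b^3 * c^4 + (1) * ω^5 * a^3 * b^4 * c^2 + (-1) * ω^5 * a^4 * b^1 * c^4 + (1) * ω^5 * a^4 * b^2 * c^3 + (1) * ω^5 * a^5 * b^3 * c^1 + (-1) * ω^6 * b^3 * c^6 + (1) * ω^6 * b^6 * c^3 + (-1) * ω^6 * a^2 * b^2 * c^5 + (1) * ω^6 * a^2 * b^3 * c^4 + (1) * ω^6 * a^3 * b^4 * c^2 + (-1) * ω^6 * a^3 * b^6 + (-1) * ω^6 * a^4 * b^1 * c^4 + (-1) * ω^6 * a^5 * b^2 * c^2 + (-1) * ω^6 * a^6 * c^3 + (1) * ω^6 * a^6 * b^3 + (1) * ω^7 * b^3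 * c^6 + (-1) * ω^7 * b^6 * c^3 + (1) * ω^7 * a^1 * b^5 * c^3 + (-1) * ω^7 * a^2 * b^2 * c^5 + (-3) * ω^7 * a^3 * b^3 * c^3 + (1) * ω^7 * a^3 * b^4 * c^2 + (1) * ω^7 * a^3 * b^6 + (-1) * ω^7 * a^4 * b^1 * c^4 + (-1) * ω^7 * a^5 * b^2 * c^2 + (1) * ω^7 * a^6 * c^3 + (-1) * ω^7 * a^6 * b^3 + (-1) * ω^8 * a^1 * b^4 * c^4 + (-1) * ω^8 * a^2 * b^2 * c^5 + (1) * ω^8 * a^3 * b^2 * c^4 + (-3) * ω^8 * a^3 * b^3 * c^3 + (1) * ω^8 * a^4 * c^5 + (-1) * ω^8 * a^4 * b^4 * c^1 + (1) * ω^8 * a^5 * b^1 * c^3 + (-1) * ω^8 * a^5 * b^2 * c^2 + (-1) * ω^9 * b^3 * c^6 + (1) * ω^9 * b^6 * c^3 + (-1) * ω^9 * a^1 * b^4 * c^4 + (1) * ω^9 * a^2 * b^1 * c^6 + (-1) * ω^9 * a^2 * b^5 * c^2 + (2) * ω^9 * a^3 * b^2 * c^4 + (-1) * ω^9 * a^3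 * b^3 * c^3 + (-1) * ω^9 * a^3 * b^6 + (1) * ω^9 * a^4 * b^3 * c^2 + (-1) * ω^9 * a^4 * b^4 * c^1 + (1) * ω^9 * a^5 * b^1 * c^3 + (-1) * ω^9 * a^6 * c^3 + (1) * ω^10 * b^3 * c^6 + (-1) * ω^10 * b^6 * c^3 + (1) * ω^10 * a^1 * b^3 * c^5 + (-1) * ω^10 * a^1 * b^4 * c^4 + (1) * ω^10 * a^2 * b^4 * c^3 + (-1) * ω^10 * a^2 * b^5 * c^2 + (3) * ω^10 * a^3 * b^2 * c^4 + (-2) * ω^10 * a^3 * b^3 * c^3 + (1) * ω^10 * a^3 * b^6 + (2) * ω^10 * a^4 * b^3 * c^2 + (-1) * ω^10 * a^4 * b^4 * c^1 + (1) * ω^10 * a^5 * b^1 * c^3 + (1) * ω^10 * a^6 * c^3 + (1) * ω^10 * a^6 * b^2 * c^1 + (1) * ω^11 * a^1 * b^3 * c^5 + (2) * ω^11 * a^2 * b^4 * c^3 + (-1) * ω^11 * a^2 * b^5 * c^2 + (-1) * ω^11 * a^3 * b^1 * c^5 + (2) * ω^11 * a^3 * b^2 * c^4 + (-1) * ω^11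 * a^4 * b^2 * c^3 + (3) * ω^11 * a^4 * b^3 * c^2 + (-1) * ω^11 * a^5 * c^4 + (-1) * ω^12 * b^3 * c^6 + (1) * ω^12 * a^1 * b^3 * c^5 + (-1) * ω^12 * a^2 * b^3 * c^4 + (3) * ω^12 * a^2 * b^4 * c^3 + (-1) * ω^12 * a^3 * b^1 * c^5 + (1) * ω^12 * a^3 * b^2 * c^4 + (1) * ω^12 * a^3 * b^3 * c^3 + (1) * ω^12 * a^3 * b^5 * c^1 + (-1) * ω^12 * a^3 * b^6 + (-2) * ω^12 * a^4 * b^2 * c^3 + (2) * ω^12 * a^4 * b^3 * c^2 + (1) * ω^12 * a^5 * b^4 + (-1) * ω^12 * a^6 * c^3 + (-1) * ω^12 * a^6 * b^1 * c^2 + (1) * ω^13 * b^3 * c^6 + (1) * ω^13 * b^5 * c^4 + (-1) * ω^13 * a^1 * b^2 * c^6 + (-2) * ω^13 * a^2 * b^3 * c^4 + (2) * ω^13 * a^2 * b^4 * c^3 + (-1) * ω^13 * a^3 * b^1 * c^5 + (-1) * ω^13 * a^3 * b^3 * c^3 + (-1) * ω^13 * a^3 * b^4 * c^2 + (1) * ω^13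 * a^3 * b^5 * c^1 + (1) * ω^13 * a^3 * b^6 + (-3) * ω^13 * a^4 * b^2 * c^3 + (1) * ω^13 * a^4 * b^3 * c^2 + (-1) * ω^13 * a^5 * b^3 * c^1 + (1) * ω^13 * a^6 * c^3 + (1) * ω^14 * a^1 * b^6 * c^2 + (-3) * ω^14 * a^2 * b^3 * c^4 + (1) * ω^14 * a^2 * b^4 * c^3 + (-2) * ω^14 * a^3 * b^4 * c^2 + (1) * ω^14 * a^3 * b^5 * c^1 + (1) * ω^14 * a^4 * b^1 * c^4 + (-2) * ω^14 * a^4 * b^2 * c^3 + (-1) * ω^14 * a^5 * b^3 * c^1 + (-1) * ω^15 * b^3 * c^6 + (-1) * ω^15 * b^4 * c^5 + (-1) * ω^15 * a^1 * b^5 * c^3 + (1) * ω^15 * a^2 * b^2 * c^5 + (-2) * ω^15 * a^2 * b^3 * c^4 + (2) * ω^15 * a^3 * b^3 * c^3 + (-3) * ω^15 * a^3 * b^4 * c^2 + (-1) * ω^15 * a^3 * b^6 + (1) * ω^15 * a^4 * b^1 * c^4 + (-1) * ω^15 * a^4 * b^2 * c^3 + (1) * ω^15 * a^5 * b^2 *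 c^2 + (-1) * ω^15 * a^5 * b^3 * c^1 + (1) * ω^16 * b^3 * c^6 + (-1) * ω^16 * a^1 * b^5 * c^3 + (1) * ω^16 * a^2 * b^2 * c^5 + (-1) * ω^16 * a^2 * b^3 * c^4 + (1) * ω^16 * a^3 * b^3 * c^3 + (-2) * ω^16 * a^3 * b^4 * c^2 + (1) * ω^16 * a^3 * b^6 + (1) * ω^16 * a^4 * b^1 * c^4 + (-1) * ω^16 * a^4 * b^5 + (1) * ω^16 * a^5 * b^2 * c^2 + (1) * ω^17 * a^1 * b^4 * c^4 + (-1) * ω^17 * a^1 * b^5 * c^3 + (1) * ω^17 * a^2 * b^2 * c^5 + (-1) * ω^17 * a^2 * b^6 * c^1 + (3) * ω^17 * a^3 * b^3 * c^3 + (-1) * ω^17 * a^3 * b^4 * c^2 + (1) * ω^17 * a^4 * b^4 * c^1 + (1) * ω^17 * a^5 * b^2 * c^2 + (1) * ω^18 * a^1 * b^4 * c^4 + (1) * ω^18 * a^2 * b^5 * c^2 + (-1) * ω^18 * a^3 * b^2 * c^4 + (3) * ω^18 * a^3 * b^3 * c^3 + (-1) * ω^18 * a^3 * b^6 + (1) *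 ω^18 * a^4 * b^4 * c^1 + (-1) * ω^18 * a^5 * b^1 * c^3 + (1) * ω^19 * a^1 * b^4 * c^4 + (1) * ω^19 * a^2 * b^5 * c^2 + (-1) * ω^19 * a^3 * b^2 * c^4 + (1) * ω^19 * a^3 * b^6 + (-1) * ω^19 * a^4 * b^3 * c^2 + (1) * ω^19 * a^4 * b^4 * c^1 + (-1) * ω^20 * a^1 * b^3 * c^5 + (-1) * ω^20 * a^2 * b^4 * c^3 + (1) * ω^20 * a^2 * b^5 * c^2 + (-1) * ω^20 * a^3 * b^2 * c^4 + (-1) * ω^20 * a^4 * b^3 * c^2 + (-1) * ω^21 * a^2 * b^4 * c^3 + (1) * ω^21 * a^3 * b^3 * c^3 + (-1) * ω^21 * a^4 * b^3 * c^2 + (-1) * ω^22 * a^2 * b^4 * c^3 + (-1) * ω^22 * a^3 * b^3 * c^3 + (-1) * ω^22 * a^3 * b^5 * c^1 + (1) * ω^22 * a^4 * b^2 * c^3 + (1) * ω^23 * a^2 * b^3 * c^4 + (1) * ω^24 * a^3 * b^3 * c^3 + (1) * ω^24 * a^3 * b^4 * c^2 + (-1) * ω^25 * a^3 * b^3 *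 c^3) * hω
end
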